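/- With F and G as defined (F(t) = ((t^2-1)/(2t)) ln|(t+1)/(t-1)| + 1 and G(t) = ((3t^4-2t^2-1)/(8t^3)) ln|(t+1)/(t-1)| + 1/(4t^2) + 7/12), one has d/dt [ (4t/3) - t·G(1/t) ] = t·F'(1/t) for all t > 0, t ≠ 1. -/
import Mathlib


noncomputable def G (t : ℝ) : ℝ :=
  ((3 * t ^ 4 - 2 * t ^ 2 - 1) / (8 * t ^ 3)) * Real.log (|(t + 1) / (t - 1)|)
    + 1 / (4 * t ^ 2) + 7 / 12

noncomputable def Fderiv (t : ℝ) : ℝ :=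
  ((t ^ 2 + 1) / (2 * t ^ 2)) * Real.log (|(t + 1) / (t - 1)|) - 1 / t

lemma log_abs_inv (s : ℝ) (hs : 0 < s) (hs1 : s ≠ 1) :
    Real.log (|(1 / s + 1) / (1 / s - 1)|) = Real.log (s + 1) - Real.log (s - 1) := by
  have hs0 : s ≠ 0 := ne_of_gt hs
  have h1 : s - 1 ≠ 0 := sub_ne_zero.mpr hs1
  have h2 : s + 1 ≠ 0 := by positivity
  have hne : (1 : ℝ) / s - 1 ≠ 0 := by
    rw [sub_ne_zero]
    intro hc
    apply hs1
    field_simp at hc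
    linarith
  have h : (1 / s + 1) / (1 / s - 1) = -((s + 1) / (s - 1)) := by
    rw [div_eq_iff hne]
    field_simp
    ring
  rw [h, abs_neg, Real.log_abs, Real.log_div h2 h1]

theorem deriv_aux (t : ℝ) (ht : 0 < t) (ht1 : t ≠ 1) :
    HasDerivAt (fun s : ℝ => 4 * s / 3 - s * G (1 / s)) (t * Fderiv (1 / t)) t := by
  have ht0 : t ≠ 0 := ne_of_gt ht
  have h1 : t - 1 ≠ 0 := sub_ne_zero.mpr ht1
  have h2 : t + 1 ≠ 0 := by positivity
  -- the simplified function
  set g : ℝ → ℝ := fun s =>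
    3 * s / 4 - s ^ 3 / 4
      - (3 - 2 * s ^ 2 - s ^ 4) / 8 * (Real.log (s + 1) - Real.log (s - 1)) with hg_def
  -- derivative of g
  have hlog1 : HasDerivAt (fun s : ℝ => Real.log (s + 1)) (1 / (t + 1)) t := by
    simpa using (HasDerivAt.log ((hasDerivAt_id t).add_const 1) h2)
  have hlog2 : HasDerivAt (fun s : ℝ => Real.log (s - 1)) (1 / (t - 1)) t := by
    simpa using (HasDerivAt.log ((hasDerivAt_id t).sub_const 1) h1)
  have hL : HasDerivAt (fun s : ℝ => Real.log (s + 1) - Real.log (s - 1))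
      (1 / (t + 1) - 1 / (t - 1)) t := hlog1.sub hlog2
  have hx2 : HasDerivAt (fun s : ℝ => s ^ 2) (2 * t) t := by
    simpa using hasDerivAt_pow 2 t
  have hx3 : HasDerivAt (fun s : ℝ => s ^ 3) (3 * t ^ 2) t := by
    simpa using hasDerivAt_pow 3 t
  have hx4 : HasDerivAt (fun s : ℝ => s ^ 4) (4 * t ^ 3) t := by
    simpa using hasDerivAt_pow 4 t
  have hq : HasDerivAt (fun s : ℝ => (3 - 2 * s ^ 2 - s ^ 4) / 8)
      ((0 - 2 * (2 * t) - 4 * t ^ 3) / 8) t :=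
    (((hasDerivAt_const t (3:ℝ)).sub (hx2.const_mul 2)).sub hx4).div_const 8
  have ha : HasDerivAt (fun s : ℝ => 3 * s / 4) (3 / 4) t := by
    simpa using ((hasDerivAt_id t).const_mul (3:ℝ)).div_const 4
  have hb : HasDerivAt (fun s : ℝ => s ^ 3 / 4) (3 * t ^ 2 / 4) t := hx3.div_const 4
  have hg : HasDerivAt g
      (3 / 4 - 3 * t ^ 2 / 4
        - ((0 - 2 * (2 * t) - 4 * t ^ 3) / 8 * (Real.log (t + 1) - Real.log (t - 1))
          + (3 - 2 * t ^ 2 - t ^ 4) / 8 * (1 / (t + 1) - 1 / (t - 1)))) t :=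
    (ha.sub hb).sub (hq.mul hL)
  -- the original function agrees with g near t
  have heq : (fun s : ℝ => 4 * s / 3 - s * G (1 / s)) =ᶠ[nhds t] g := by
    have hopen : IsOpen ({s : ℝ | 0 < s} ∩ {(1:ℝ)}ᶜ) :=
      (isOpen_lt continuous_const continuous_id).inter isOpen_compl_singleton
    filter_upwards [hopen.mem_nhds ⟨ht, ht1⟩] with s hsmem
    obtain ⟨hs, hs1⟩ := hsmem
    have hs1' : s ≠ 1 := hs1
    have hs0 : s ≠ 0 := ne_of_gt hs
    simp only [G, hg_def]
    rw [log_abs_inv s hs hs1']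
    field_simp
    ring
  -- value of the derivative
  have hval : t * Fderiv (1 / t)
      = 3 / 4 - 3 * t ^ 2 / 4
        - ((0 - 2 * (2 * t) - 4 * t ^ 3) / 8 * (Real.log (t + 1) - Real.log (t - 1))
          + (3 - 2 * t ^ 2 - t ^ 4) / 8 * (1 / (t + 1) - 1 / (t - 1))) := by
    simp only [Fderiv]
    rw [log_abs_inv t ht ht1]
    field_simp
    ring
  rw [hval]
  exact hg.congr_of_eventuallyEq heq
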